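/- Let ι : X → X̃ be an extension of a Lorentzian pre-length space, γ̃ : [0,1] → X̃ a timelike maximizer with γ̃(0) = ι(q) ∈ ι(X), and t ∈ (0,1] minimal with γ̃(t) ∉ ι(X). Then the curve γ = ι⁻¹ ∘ γ̃|_{[0,t)} is a timelike curve in X of finite τ-length: L_τ(γ) = lim_{s↗t} τ̃(ι(q), γ̃(s)) ≤ τ̃(ι(q), γ̃(t)) < ∞, provided τ̃(ι(q), γ̃(1)) < ∞. -/

import Mathlib

open Set

/-- A Lorentzian pre-length space: a set `X` with an extended time separation
function `ell : X × X → {-∞} ∪ [0,∞]` (modelled as `EReal` whose values are either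
`⊥ = -∞` or nonnegative) satisfying the reverse triangle inequality (with the
convention `-∞ + ∞ = -∞`, which is `EReal` addition) and `ell x x ≥ 0`. -/
structure LPLS (X : Type*) where
  ell : X → X → EReal
  range_cond : ∀ x y, ell x y = ⊥ ∨ 0 ≤ ell x y
  rev_tri : ∀ x y z, ell x y + ell y z ≤ ell x z
  refl_nonneg : ∀ x, 0 ≤ ell x x

namespace LPLS

variable {X : Type*}

/-- The causal relation `x ≤ y` iff `ℓ(x,y) ≥ 0`. -/
def causal (L : LPLS X) (x y : X) : Prop := 0 ≤ L.ell x y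

/-- The chronological (timelike) relation `x ≪ y` iff `ℓ(x,y) > 0`. -/
def chron (L : LPLS X) (x y : X) : Prop := 0 < L.ell x y

/-- The time separation function `τ = max(0, ℓ)`. -/
noncomputable def tau (L : LPLS X) (x y : X) : EReal := max 0 (L.ell x y)

/-- The chronological future `I⁺(x)`. -/
def Iplus (L : LPLS X) (x : X) : Set X := {z | L.chron x z}

/-- The chronological past `I⁻(x)`. -/
def Iminus (L : LPLS X) (x : X) : Set X := {z | L.chron z x}

/-- A causal curve on `[a,b]`: continuous and totally ordered by `≤`. -/
def IsCausalCurve [TopologicalSpace X] (L : LPLS X) (γ : ℝ → X) (a b : ℝ) : Prop :=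
  a ≤ b ∧ ContinuousOn γ (Icc a b) ∧
    ∀ ⦃s t : ℝ⦄, s ∈ Icc a b → t ∈ Icc a b → s < t → L.causal (γ s) (γ t)

/-- A timelike curve on `[a,b]`: continuous and totally ordered by `≪`. -/
def IsTimelikeCurve [TopologicalSpace X] (L : LPLS X) (γ : ℝ → X) (a b : ℝ) : Prop :=
  a ≤ b ∧ ContinuousOn γ (Icc a b) ∧
    ∀ ⦃s t : ℝ⦄, s ∈ Icc a b → t ∈ Icc a b → s < t → L.chron (γ s) (γ t)

/-- A curve is null on `[a,b]` if no two of its points are chronologically related. -/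
def IsNullOn (L : LPLS X) (γ : ℝ → X) (a b : ℝ) : Prop :=
  ∀ ⦃s t : ℝ⦄, s ∈ Icc a b → t ∈ Icc a b → s < t → ¬ L.chron (γ s) (γ t)

/-- The `τ`-length of a curve on `[a,b]`:
`L_τ(γ) = inf { Σ τ(γ(t_{i-1}), γ(t_i)) : a = t₀ < t₁ < … < t_N = b }`. -/
noncomputable def len (L : LPLS X) (γ : ℝ → X) (a b : ℝ) : EReal :=
  ⨅ (N : ℕ) (t : Fin (N + 1) → ℝ) (_ : StrictMono t) (_ : t 0 = a)
      (_ : t (Fin.last N) = b),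
    ∑ i : Fin N, L.tau (γ (t i.castSucc)) (γ (t i.succ))

/-- A (causal) maximizer: a causal curve whose length realizes the time separation
of its endpoints. -/
def IsMaximizer [TopologicalSpace X] (L : LPLS X) (γ : ℝ → X) (a b : ℝ) : Prop :=
  L.IsCausalCurve γ a b ∧ L.len γ a b = L.tau (γ a) (γ b)

/-- Regularity: every causal maximizer is either timelike or null. -/
def Regular [TopologicalSpace X] (L : LPLS X) : Prop :=
  ∀ (γ : ℝ → X) (a b : ℝ), a < b → L.IsMaximizer γ a b →
    L.IsTimelikeCurve γ a b ∨ L.IsNullOn γ a b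

/-- The topology is finer than the chronological topology: all `I±(x)` are open. -/
def ChronOpen [TopologicalSpace X] (L : LPLS X) : Prop :=
  ∀ x : X, IsOpen (L.Iplus x) ∧ IsOpen (L.Iminus x)

/-- Locally distinguishing: distinct points are distinguished by their futures or
pasts within every common neighbourhood. -/
def LocallyDistinguishing [TopologicalSpace X] (L : LPLS X) : Prop :=
  ∀ ⦃x y : X⦄, x ≠ y → ∀ U : Set X, U ∈ nhds x → U ∈ nhds y →
    L.Iplus x ∩ U ≠ L.Iplus y ∩ U ∨ L.Iminus x ∩ U ≠ L.Iminus y ∩ U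

/-- Not locally timelike isolating: every neighbourhood of every point meets its
chronological future and past. -/
def NotLocallyIsolating [TopologicalSpace X] (L : LPLS X) : Prop :=
  ∀ x : X, ∀ U ∈ nhds x, (L.Iplus x ∩ U).Nonempty ∧ (L.Iminus x ∩ U).Nonempty

/-- The push-up property. -/
def PushUp (L : LPLS X) : Prop :=
  (∀ ⦃x y z : X⦄, L.chron x y → L.causal y z → L.chron x z) ∧
  (∀ ⦃x y z : X⦄, L.causal x y → L.chron y z → L.chron x z)

end LPLS

/-- An extension of a Lorentzian pre-length space `(X, L)`: a connected
Lorentzian pre-length space `(Y, L')` with a homeomorphism `ι` of `X` onto a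
proper open subset of `Y` preserving the extended time separation. -/
def IsExtension {X Y : Type*} [TopologicalSpace X] [TopologicalSpace Y]
    (L : LPLS X) (L' : LPLS Y) (ι : X → Y) : Prop :=
  ConnectedSpace Y ∧ Topology.IsOpenEmbedding ι ∧ Set.range ι ≠ Set.univ ∧
  ∀ x y : X, L'.ell (ι x) (ι y) = L.ell x y

/-- The extension `(Y, L', ι)` has no spacelike boundary: no point of `Y` is
`-∞`-related to all of `ι(X)` in both time directions. -/
def NoSpacelikeBoundary {X Y : Type*} (L' : LPLS Y) (ι : X → Y) : Prop :=
  ¬ ∃ p : Y, ∀ x : X, L'.ell p (ι x) = ⊥ ∧ L'.ell (ι x) p = ⊥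

/-- Weakly normal: every point `p` has a neighborhood `U` on which `τ` is
finite, causally related distinct points of `U` are joined by maximizers, and
`I⁺(p) ∩ U`, `I⁻(p) ∩ U` are nonempty. -/
def WeaklyNormal {X : Type*} [TopologicalSpace X] (L : LPLS X) : Prop :=
  ∀ p : X, ∃ U ∈ nhds p,
    (∀ x ∈ U, ∀ y ∈ U, L.tau x y ≠ ⊤) ∧
    (∀ x ∈ U, ∀ y ∈ U, L.causal x y → x ≠ y →
      ∃ γ : ℝ → X, L.IsMaximizer γ 0 1 ∧ γ 0 = x ∧ γ 1 = y) ∧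
    (L.Iplus p ∩ U).Nonempty ∧ (L.Iminus p ∩ U).Nonempty


section Stmt15Aux
open LPLS

variable {Y : Type*}

lemma stmt15_strictMono_snoc {N : ℕ} {p : Fin (N+1) → ℝ} (hp : StrictMono p) {c : ℝ}
    (h : p (Fin.last N) < c) : StrictMono (Fin.snoc p c) := by
  intro i j hij
  induction j using Fin.lastCases with
  | last =>
    have hi : i ≠ Fin.last (N+1) := Fin.ne_last_of_lt hij
    obtain ⟨i', rfl⟩ := Fin.exists_castSucc_eq.2 hi
    rw [Fin.snoc_castSucc, Fin.snoc_last]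
    exact lt_of_le_of_lt (hp.monotone (Fin.le_last i')) h
  | cast j' =>
    have hi : i ≠ Fin.last (N+1) := Fin.ne_last_of_lt (lt_of_lt_of_le hij (Fin.le_last _))
    obtain ⟨i', rfl⟩ := Fin.exists_castSucc_eq.2 hi
    rw [Fin.snoc_castSucc, Fin.snoc_castSucc]
    exact hp (by exact_mod_cast hij)

lemma stmt15_sum_tau_le_ell (L : LPLS Y) : ∀ (N : ℕ) (f : Fin (N+1) → Y),
    (∀ i : Fin N, L.chron (f i.castSucc) (f i.succ)) →
    ∑ i : Fin N, L.tau (f i.castSucc) (f i.succ) ≤ L.ell (f 0) (f (Fin.last N)) := by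
  intro N
  induction N with
  | zero => intro f _; simpa using L.refl_nonneg (f 0)
  | succ N ih =>
    intro f hf
    rw [Fin.sum_univ_castSucc]
    have h1 : ∑ i : Fin N, L.tau ((f ∘ Fin.castSucc) i.castSucc) ((f ∘ Fin.castSucc) i.succ)
        ≤ L.ell (f 0) (f (Fin.last N).castSucc) := by
      have := ih (f ∘ Fin.castSucc) (fun i => by
        have := hf i.castSucc
        simpa [Fin.succ_castSucc, -Fin.castSucc_succ] using this)
      simpa using this
    have hsum : ∑ i : Fin N, L.tau (f i.castSucc.castSucc) (f i.castSucc.succ)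
        = ∑ i : Fin N, L.tau ((f ∘ Fin.castSucc) i.castSucc) ((f ∘ Fin.castSucc) i.succ) := by
      refine Finset.sum_congr rfl fun i _ => ?_
      simp [Fin.succ_castSucc, -Fin.castSucc_succ]
    have hlast : L.tau (f (Fin.last N).castSucc) (f (Fin.last N).succ)
        = L.ell (f (Fin.last N).castSucc) (f (Fin.last N).succ) :=
      max_eq_right (le_of_lt (hf (Fin.last N)))
    calc ∑ i : Fin N, L.tau (f i.castSucc.castSucc) (f i.castSucc.succ)
          + L.tau (f (Fin.last N).castSucc) (f (Fin.last N).succ)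
        ≤ L.ell (f 0) (f (Fin.last N).castSucc)
          + L.ell (f (Fin.last N).castSucc) (f (Fin.last N).succ) := by
          rw [hsum, hlast]; exact add_le_add_left h1 _
      _ ≤ L.ell (f 0) (f (Fin.last (N+1))) := by
          refine le_trans (L.rev_tri _ _ _) ?_
          rw [Fin.succ_last]

end Stmt15Aux
/-- if `γ̃ : [0,1] → X̃` is a timelike maximizer in an extension
starting at `γ̃(0) = ι(q)` and leaving `ι(X)` for the first time at
`t ∈ (0,1]`, then `γ = ι⁻¹ ∘ γ̃|_{[0,t)}` is a timelike curve in `X` of finite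
`τ`-length `L_τ(γ) = lim_{s↗t} τ̃(ι(q), γ̃(s)) ≤ τ̃(ι(q), γ̃(t)) < ∞`, provided
`τ̃(ι(q), γ̃(1)) < ∞`. -/
theorem stmt15 {X Y : Type*} [TopologicalSpace X] [TopologicalSpace Y]
    (L : LPLS X) (L' : LPLS Y) (ι : X → Y) (hext : IsExtension L L' ι)
    (γ' : ℝ → Y) (q : X) (t : ℝ)
    (hmax : L'.IsMaximizer γ' 0 1) (htl : L'.IsTimelikeCurve γ' 0 1)
    (h0 : γ' 0 = ι q) (ht : t ∈ Set.Ioc (0:ℝ) 1)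
    (hout : γ' t ∉ Set.range ι) (hin : ∀ s ∈ Set.Ico (0:ℝ) t, γ' s ∈ Set.range ι)
    (hfin : L'.tau (ι q) (γ' 1) ≠ ⊤) :
    ∃ γ : ℝ → X,
      (∀ s ∈ Set.Ico (0:ℝ) t, ι (γ s) = γ' s) ∧
      (∀ s ∈ Set.Ioo (0:ℝ) t, L.IsTimelikeCurve γ 0 s) ∧
      (⨆ (s : ℝ) (_ : s ∈ Set.Ico (0:ℝ) t), L.len γ 0 s) =
        (⨆ (s : ℝ) (_ : s ∈ Set.Ico (0:ℝ) t), L'.tau (ι q) (γ' s)) ∧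
      (⨆ (s : ℝ) (_ : s ∈ Set.Ico (0:ℝ) t), L.len γ 0 s) ≤ L'.tau (ι q) (γ' t) ∧
      L'.tau (ι q) (γ' t) ≠ ⊤ := by
  obtain ⟨-, hemb, -, hE⟩ := hext
  obtain ⟨ht0, ht1⟩ := ht
  obtain ⟨-, hcont', hchron'⟩ := htl
  haveI : Nonempty X := ⟨q⟩
  set γ : ℝ → X := fun u => Function.invFun ι (γ' u) with hγdef
  have hγι : ∀ s ∈ Set.Ico (0:ℝ) t, ι (γ s) = γ' s :=
    fun s hs => Function.invFun_eq (hin s hs)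
  -- timelike relations along γ'
  have hc : ∀ {u v : ℝ}, 0 ≤ u → u < v → v ≤ 1 → 0 < L'.ell (γ' u) (γ' v) := by
    intro u v hu huv hv
    exact hchron' ⟨hu, huv.le.trans hv⟩ ⟨hu.trans huv.le, hv⟩ huv
  have hstep : ∀ a b c : Y, 0 ≤ L'.ell b c → L'.ell a b ≤ L'.ell a c := by
    intro a b c h
    exact le_trans (le_add_of_nonneg_right h) (L'.rev_tri a b c)
  rw [← h0] at hfin
  have h01top : L'.ell (γ' 0) (γ' 1) ≠ ⊤ := by
    intro h
    exact hfin (by rw [LPLS.tau, h, max_eq_right le_top])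
  have helle1 : ∀ {v : ℝ}, 0 < v → v ≤ 1 → L'.ell (γ' 0) (γ' v) ≤ L'.ell (γ' 0) (γ' 1) := by
    intro v hv hv1
    rcases eq_or_lt_of_le hv1 with rfl | h
    · exact le_rfl
    · exact hstep _ _ _ (hc hv.le h le_rfl).le
  have hvtop : ∀ {v : ℝ}, 0 < v → v ≤ 1 → L'.ell (γ' 0) (γ' v) ≠ ⊤ := by
    intro v hv hv1 h
    exact h01top (top_le_iff.1 (h ▸ helle1 hv hv1))
  -- transfer of ell and tau through ι
  have hellT : ∀ {u v : ℝ}, u ∈ Set.Ico (0:ℝ) t → v ∈ Set.Ico (0:ℝ) t →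
      L.ell (γ u) (γ v) = L'.ell (γ' u) (γ' v) := by
    intro u v hu hv
    rw [← hγι u hu, ← hγι v hv, hE]
  have htauT : ∀ {u v : ℝ}, u ∈ Set.Ico (0:ℝ) t → v ∈ Set.Ico (0:ℝ) t →
      L.tau (γ u) (γ v) = L'.tau (γ' u) (γ' v) := by
    intro u v hu hv
    simp only [LPLS.tau, hellT hu hv]
  -- length transfer
  have hlenT : ∀ s ∈ Set.Ico (0:ℝ) t, L.len γ 0 s = L'.len γ' 0 s := by
    intro s hs
    simp only [LPLS.len]
    refine iInf_congr fun N => iInf_congr fun p => iInf_congr fun hsm => iInf_congr fun h0p =>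
      iInf_congr fun hlast => Finset.sum_congr rfl fun i _ => ?_
    have hmem : ∀ j : Fin (N+1), p j ∈ Set.Ico (0:ℝ) t := by
      intro j
      constructor
      · rw [← h0p]; exact hsm.monotone (Fin.zero_le j)
      · calc p j ≤ p (Fin.last N) := hsm.monotone (Fin.le_last j)
          _ = s := hlast
          _ < t := hs.2
    exact htauT (hmem _) (hmem _)
  -- length is at most tau of the endpoints
  have hlen_le : ∀ {a b : ℝ}, a < b → L'.len γ' a b ≤ L'.tau (γ' a) (γ' b) := by
    intro a b hab
    simp only [LPLS.len]
    refine iInf_le_of_le 1 (iInf_le_of_le ![a, b] (iInf_le_of_le ?_ (iInf_le_of_le (by simp)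
      (iInf_le_of_le (by simp [Fin.last]) ?_))))
    · intro i j hij
      fin_cases i <;> fin_cases j <;> simp_all
    · simp
  -- maximizer: length of initial segment equals tau
  have hkey : ∀ {s : ℝ}, 0 < s → s < 1 → L'.len γ' 0 s = L'.tau (γ' 0) (γ' s) := by
    intro s hs0 hs1
    refine le_antisymm (hlen_le hs0) ?_
    conv_rhs => simp only [LPLS.len]
    refine le_iInf fun N => le_iInf fun p => le_iInf fun hsm => le_iInf fun h0p =>
      le_iInf fun hlast => ?_
    rcases N with _ | M
    · exfalso
      have : (0:ℝ) = s := h0p.symm.trans hlast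
      exact hs0.ne this
    · have hmem : ∀ j : Fin (M+2), 0 ≤ p j ∧ p j ≤ s := by
        intro j
        constructor
        · rw [← h0p]; exact hsm.monotone (Fin.zero_le j)
        · rw [← hlast]; exact hsm.monotone (Fin.le_last j)
      set p' : Fin (M+3) → ℝ := Fin.snoc p 1 with hp'
      have hsm' : StrictMono p' := stmt15_strictMono_snoc hsm (by rw [hlast]; exact hs1)
      have hp'0 : p' 0 = 0 := by
        rw [hp', show (0 : Fin (M+3)) = Fin.castSucc 0 from rfl, Fin.snoc_castSucc]
        exact h0p
      have hp'last : p' (Fin.last (M+2)) = 1 := Fin.snoc_last _ _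
      have hsplit : ∑ i : Fin (M+2), L'.tau (γ' (p' i.castSucc)) (γ' (p' i.succ))
          = (∑ i : Fin (M+1), L'.tau (γ' (p i.castSucc)) (γ' (p i.succ)))
            + L'.tau (γ' s) (γ' 1) := by
        rw [Fin.sum_univ_castSucc]
        congr 1
        · refine Finset.sum_congr rfl fun i _ => ?_
          rw [hp']
          rw [show (i.castSucc).castSucc = Fin.castSucc (i.castSucc) from rfl, Fin.snoc_castSucc,
              Fin.succ_castSucc, Fin.snoc_castSucc]
        · rw [hp']
          rw [show (Fin.last (M+1)).castSucc = Fin.castSucc (Fin.last (M+1)) from rfl,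
              Fin.snoc_castSucc, Fin.succ_last, Fin.snoc_last, hlast]
      have hlen1 : L'.len γ' 0 1 ≤
          (∑ i : Fin (M+1), L'.tau (γ' (p i.castSucc)) (γ' (p i.succ))) + L'.tau (γ' s) (γ' 1) := by
        rw [← hsplit]
        simp only [LPLS.len]
        exact iInf_le_of_le (M+2) (iInf_le_of_le p' (iInf_le_of_le hsm'
          (iInf_le_of_le hp'0 (iInf_le_of_le hp'last le_rfl))))
      have hpos : 0 < L'.ell (γ' s) (γ' 1) := hc hs0.le hs1 le_rfl
      have hells1 : L'.ell (γ' s) (γ' 1) ≠ ⊤ := by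
        intro htop
        apply h01top
        have h1 : L'.ell (γ' s) (γ' 1) ≤ L'.ell (γ' 0) (γ' 1) :=
          le_trans (le_add_of_nonneg_left (hc le_rfl hs0 hs1.le).le) (L'.rev_tri _ _ _)
        rw [htop] at h1
        exact top_le_iff.1 h1
      have hnb : L'.ell (γ' s) (γ' 1) ≠ ⊥ := by
        intro hb
        rw [hb] at hpos
        exact absurd hpos (not_lt.2 bot_le)
      obtain ⟨r, hr⟩ := EReal.canLift.prf _ ⟨hells1, hnb⟩
      have htau_s1 : L'.tau (γ' s) (γ' 1) = (r : EReal) := by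
        rw [LPLS.tau, max_eq_right hpos.le, ← hr]
      have hchain2 : L'.tau (γ' 0) (γ' s) + L'.tau (γ' s) (γ' 1) ≤ L'.tau (γ' 0) (γ' 1) := by
        rw [LPLS.tau, LPLS.tau, max_eq_right (hc le_rfl hs0 hs1.le).le, max_eq_right hpos.le]
        exact le_trans (L'.rev_tri _ _ _) (le_max_right _ _)
      have hfinal : L'.tau (γ' 0) (γ' s) + (r : EReal) ≤
          (∑ i : Fin (M+1), L'.tau (γ' (p i.castSucc)) (γ' (p i.succ))) + (r : EReal) := by
        rw [← htau_s1]
        calc L'.tau (γ' 0) (γ' s) + L'.tau (γ' s) (γ' 1) ≤ L'.tau (γ' 0) (γ' 1) := hchain2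
          _ = L'.len γ' 0 1 := hmax.2.symm
          _ ≤ _ := hlen1
      exact (EReal.addLECancellable_coe r).add_le_add_iff_right.1 hfinal
  -- length of the degenerate segment
  have hlen0 : L.len γ 0 0 = 0 := by
    refine le_antisymm ?_ ?_
    · simp only [LPLS.len]
      refine iInf_le_of_le 0 (iInf_le_of_le (fun _ => 0) (iInf_le_of_le ?_
        (iInf_le_of_le rfl (iInf_le_of_le rfl ?_))))
      · intro i j hij
        exfalso
        rw [Fin.lt_def] at hij
        omega
      · simp
    · simp only [LPLS.len]
      refine le_iInf fun N => le_iInf fun p => le_iInf fun _ => le_iInf fun _ =>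
        le_iInf fun _ => ?_
      exact Finset.sum_nonneg fun i _ => le_max_left _ _
  -- tau of the coincident endpoints vanishes
  have htau00 : L'.tau (γ' 0) (γ' 0) = 0 := by
    have hs0 : (0:ℝ) < t/2 := by linarith
    have hs1 : t/2 ≤ 1 := by linarith
    have hpos : 0 < L'.ell (γ' 0) (γ' (t/2)) := hc le_rfl hs0 hs1
    have hnt : L'.ell (γ' 0) (γ' (t/2)) ≠ ⊤ := hvtop hs0 hs1
    have hnb : L'.ell (γ' 0) (γ' (t/2)) ≠ ⊥ := by
      intro hb
      rw [hb] at hpos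
      exact absurd hpos (not_lt.2 bot_le)
    obtain ⟨r, hr⟩ := EReal.canLift.prf _ ⟨hnt, hnb⟩
    have h2 : L'.ell (γ' 0) (γ' 0) + (r : EReal) ≤ 0 + (r : EReal) := by
      rw [zero_add, hr]
      exact L'.rev_tri _ _ _
    have h3 := (EReal.addLECancellable_coe r).add_le_add_iff_right.1 h2
    rw [LPLS.tau, max_eq_left h3]
  -- the key identity for every s ∈ [0, t)
  have hkey2 : ∀ s ∈ Set.Ico (0:ℝ) t, L.len γ 0 s = L'.tau (ι q) (γ' s) := by
    intro s hs
    rw [← h0]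
    rcases eq_or_lt_of_le hs.1 with rfl | hpos
    · rw [hlen0, htau00]
    · rw [hlenT s hs, hkey hpos (lt_of_lt_of_le hs.2 ht1)]
  have hsupeq : (⨆ (s : ℝ) (_ : s ∈ Set.Ico (0:ℝ) t), L.len γ 0 s) =
      (⨆ (s : ℝ) (_ : s ∈ Set.Ico (0:ℝ) t), L'.tau (ι q) (γ' s)) :=
    iSup_congr fun s => iSup_congr fun hs => hkey2 s hs
  have hsuple : (⨆ (s : ℝ) (_ : s ∈ Set.Ico (0:ℝ) t), L'.tau (ι q) (γ' s)) ≤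
      L'.tau (ι q) (γ' t) := by
    refine iSup_le fun s => iSup_le fun hs => ?_
    rw [← h0]
    rcases eq_or_lt_of_le hs.1 with rfl | hpos
    · rw [htau00]
      exact le_max_left _ _
    · have h1 : L'.ell (γ' 0) (γ' s) ≤ L'.ell (γ' 0) (γ' t) :=
        hstep _ _ _ (hc hpos.le hs.2 ht1).le
      exact max_le_max le_rfl h1
  have hnetopt : L'.tau (ι q) (γ' t) ≠ ⊤ := by
    rw [← h0]
    intro h
    apply hvtop ht0 ht1
    rw [LPLS.tau] at h
    rcases max_choice (0 : EReal) (L'.ell (γ' 0) (γ' t)) with h' | h'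
    · rw [h'] at h
      exact absurd h (by simp)
    · rw [h'] at h
      exact h
  refine ⟨γ, hγι, ?_, hsupeq, ?_, hnetopt⟩
  · intro s hs
    refine ⟨hs.1.le, ?_, ?_⟩
    · rw [hemb.toIsEmbedding.toIsInducing.continuousOn_iff]
      refine ContinuousOn.congr (hcont'.mono (Icc_subset_Icc le_rfl (hs.2.le.trans ht1))) ?_
      intro u hu
      exact hγι u ⟨hu.1, lt_of_le_of_lt hu.2 hs.2⟩
    · intro u v hu hv huv
      have hu' : u ∈ Set.Ico (0:ℝ) t := ⟨hu.1, lt_of_le_of_lt hu.2 hs.2⟩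
      have hv' : v ∈ Set.Ico (0:ℝ) t := ⟨hv.1, lt_of_le_of_lt hv.2 hs.2⟩
      show 0 < L.ell (γ u) (γ v)
      rw [hellT hu' hv']
      exact hc hu.1 huv (hv.2.trans (hs.2.le.trans ht1))
  · rw [hsupeq]
    exact hsuple
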